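/- Fix any set R ⊆ {0,1,2}×{0,1,2}. Let S = {(0,0),(0,1),(0,2),(0,3)} ∪ {(a+1,b+1) : (a,b) ∈ R}, and set q1 = (123, S), q2 = (132, S), p1 = (12, R), p2 = (21, R). Then q1 and q2 are jointly equidistributed if and only if p1 and p2 are jointly equidistributed. -/

import Mathlib

/-- The boundary-extended sequence of positions of a candidate occurrence:
`posExt i 0 = 0`, `posExt i a = i (a-1) + 1` (1-based position) for `1 ≤ a ≤ m`,
and `posExt i (m+1) = n + 1`. -/
def posExt {m n : ℕ} (i : Fin m → Fin n) : ℕ → ℕ := fun a =>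
  if h : 1 ≤ a ∧ a ≤ m then ((i ⟨a - 1, by omega⟩ : Fin n) : ℕ) + 1
  else if a = 0 then 0 else n + 1

/-- The boundary-extended increasing rearrangement of the values of a candidate
occurrence: `valExt τ π i 0 = 0`, `valExt τ π i b = π (i (τ⁻¹ (b-1))) + 1`
(the `b`-th smallest value, 1-based) for `1 ≤ b ≤ m`, and `valExt τ π i (m+1) = n + 1`. -/
def valExt {m n : ℕ} (τ : Equiv.Perm (Fin m)) (π : Equiv.Perm (Fin n))
    (i : Fin m → Fin n) : ℕ → ℕ := fun b =>
  if h : 1 ≤ b ∧ b ≤ m then ((π (i (τ.symm ⟨b - 1, by omega⟩)) : Fin n) : ℕ) + 1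
  else if b = 0 then 0 else n + 1

/-- `i : Fin m → Fin n` is an occurrence of the mesh pattern `(τ, R)` in the
permutation `π` of `{1, …, n}` (positions and values are taken 1-based via `+1`). -/
def IsMeshOcc {m n : ℕ} (τ : Equiv.Perm (Fin m)) (R : Set (ℕ × ℕ))
    (π : Equiv.Perm (Fin n)) (i : Fin m → Fin n) : Prop :=
  StrictMono i ∧
  (∀ a b : Fin m, π (i a) < π (i b) ↔ τ a < τ b) ∧
  ∀ a b : ℕ, (a, b) ∈ R →
    ¬ ∃ j : Fin n,
        posExt i a < (j : ℕ) + 1 ∧ (j : ℕ) + 1 < posExt i (a + 1) ∧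
        valExt τ π i b < ((π j : Fin n) : ℕ) + 1 ∧
        ((π j : Fin n) : ℕ) + 1 < valExt τ π i (b + 1)

/-- The number of occurrences of the mesh pattern `(τ, R)` in `π`. -/
noncomputable def occ {m n : ℕ} (τ : Equiv.Perm (Fin m)) (R : Set (ℕ × ℕ))
    (π : Equiv.Perm (Fin n)) : ℕ :=
  Nat.card {i : Fin m → Fin n // IsMeshOcc τ R π i}

/-- Mesh patterns `(τ₁, R₁)` and `(τ₂, R₂)` are jointly equidistributed. -/
def JointlyEquidistributed {m₁ m₂ : ℕ} (τ₁ : Equiv.Perm (Fin m₁)) (R₁ : Set (ℕ × ℕ))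
    (τ₂ : Equiv.Perm (Fin m₂)) (R₂ : Set (ℕ × ℕ)) : Prop :=
  ∀ n k ℓ : ℕ,
    Nat.card {π : Equiv.Perm (Fin n) // occ τ₁ R₁ π = k ∧ occ τ₂ R₂ π = ℓ} =
    Nat.card {π : Equiv.Perm (Fin n) // occ τ₁ R₁ π = ℓ ∧ occ τ₂ R₂ π = k}

/-- The pattern 123 (identity on three letters). -/
def perm123 : Equiv.Perm (Fin 3) := 1

/-- The pattern 132 (0-indexed: `0 ↦ 0`, `1 ↦ 2`, `2 ↦ 1`). -/
def perm132 : Equiv.Perm (Fin 3) := Equiv.swap 1 2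

/-- The pattern 12 (identity on two letters). -/
def perm12 : Equiv.Perm (Fin 2) := 1

/-- The pattern 21. -/
def perm21 : Equiv.Perm (Fin 2) := Equiv.swap 0 1

/-- The unsigned Stirling numbers of the first kind. -/
def stirlingFirst : ℕ → ℕ → ℕ
  | 0, 0 => 1
  | 0, _ + 1 => 0
  | _ + 1, 0 => 0
  | n + 1, k + 1 => n * stirlingFirst n (k + 1) + stirlingFirst n k

open Finset Equiv

section Ext
variable {m n : ℕ} (i : Fin m → Fin n) (τ : Equiv.Perm (Fin m)) (π : Equiv.Perm (Fin n))

lemma posExt_zero : posExt i 0 = 0 := by simp [posExt]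

lemma posExt_succ {a : ℕ} (ha : a < m) : posExt i (a + 1) = (i ⟨a, ha⟩ : ℕ) + 1 := by
  simp only [posExt]
  rw [dif_pos ⟨by omega, by omega⟩]
  congr

lemma posExt_of_gt {a : ℕ} (ha : m < a) : posExt i a = n + 1 := by
  simp only [posExt]
  rw [dif_neg (by omega), if_neg (by omega)]

lemma valExt_zero : valExt τ π i 0 = 0 := by simp [valExt]

lemma valExt_succ {b : ℕ} (hb : b < m) :
    valExt τ π i (b + 1) = (π (i (τ.symm ⟨b, hb⟩)) : ℕ) + 1 := by
  simp only [valExt]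
  rw [dif_pos ⟨by omega, by omega⟩]
  congr

lemma valExt_of_gt {b : ℕ} (hb : m < b) : valExt τ π i b = n + 1 := by
  simp only [valExt]
  rw [dif_neg (by omega), if_neg (by omega)]

end Ext

section Sub

variable {N : ℕ}

/-- positions of entries with value greater than `π 0`. -/
def bigPos (π : Perm (Fin (N + 1))) : Finset (Fin (N + 1)) :=
  univ.filter (fun j => π 0 < π j)

lemma mem_bigPos {π : Perm (Fin (N + 1))} {j : Fin (N + 1)} :
    j ∈ bigPos π ↔ π 0 < π j := by simp [bigPos]

lemma card_bigPos (π : Perm (Fin (N + 1))) : (bigPos π).card = N - (π 0 : ℕ) := by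
  have : N + 1 - 1 - (π 0 : ℕ) = N - (π 0 : ℕ) := by omega
  rw [← this, ← Fin.card_Ioi (π 0)]
  apply Finset.card_bij (fun j _ => π j)
  · intro a ha; simpa using (mem_bigPos.mp ha)
  · intro a _ b _ hab; exact π.injective hab
  · intro w hw; exact ⟨π.symm w, mem_bigPos.mpr (by simpa using hw), by simp⟩

lemma card_bigPosV {π : Perm (Fin (N + 1))} {v : Fin (N + 1)} (h : π 0 = v) :
    (bigPos π).card = N - (v : ℕ) := by rw [card_bigPos, h]

/-- values greater than `v`. -/
def bigVal (v : Fin (N + 1)) : Finset (Fin (N + 1)) := Finset.Ioi v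

lemma mem_bigVal {v w : Fin (N + 1)} : w ∈ bigVal v ↔ v < w := by simp [bigVal]

lemma card_bigVal (v : Fin (N + 1)) : (bigVal v).card = N - (v : ℕ) := by
  have := Fin.card_Ioi v
  rw [bigVal, this]
  omega

def pIso {π : Perm (Fin (N + 1))} {v : Fin (N + 1)} (h : π 0 = v) :
    Fin (N - (v : ℕ)) ≃o {x // x ∈ bigPos π} :=
  (bigPos π).orderIsoOfFin (card_bigPosV h)

def vIso (v : Fin (N + 1)) : Fin (N - (v : ℕ)) ≃o {x // x ∈ bigVal v} :=
  (bigVal v).orderIsoOfFin (card_bigVal v)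

lemma pIso_mem {π : Perm (Fin (N + 1))} {v : Fin (N + 1)} (h : π 0 = v)
    (x : Fin (N - (v : ℕ))) : π 0 < π (pIso h x) :=
  mem_bigPos.mp (pIso h x).2

lemma vIso_mem (v : Fin (N + 1)) (x : Fin (N - (v : ℕ))) : v < (vIso v x : Fin (N + 1)) :=
  mem_bigVal.mp (vIso v x).2

noncomputable def subAt {π : Perm (Fin (N + 1))} {v : Fin (N + 1)} (h : π 0 = v) :
    Perm (Fin (N - (v : ℕ))) :=
  Equiv.ofBijective
    (fun x => (vIso v).symm ⟨π (pIso h x), mem_bigVal.mpr (h ▸ pIso_mem h x)⟩)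
    (Finite.injective_iff_bijective.mp (by
      intro a b hab
      have := congrArg (fun y => ((vIso v) y : Fin (N + 1))) hab
      simp only [OrderIso.apply_symm_apply] at this
      exact (pIso h).injective (Subtype.ext (π.injective this))))

lemma subAt_spec {π : Perm (Fin (N + 1))} {v : Fin (N + 1)} (h : π 0 = v)
    (x : Fin (N - (v : ℕ))) :
    ((vIso v) (subAt h x) : Fin (N + 1)) = π (pIso h x) := by
  simp [subAt, Equiv.ofBijective]

end Sub

section Translate

variable {N : ℕ} {π : Perm (Fin (N + 1))} {v : Fin (N + 1)}

/-- extend an occurrence candidate in the subpermutation to one in `π`. -/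
def extF (h : π 0 = v) (i' : Fin 2 → Fin (N - (v : ℕ))) : Fin 3 → Fin (N + 1) :=
  fun a => Fin.cases 0 (fun a' => (pIso h (i' a') : Fin (N + 1))) a

variable (h : π 0 = v) (i' : Fin 2 → Fin (N - (v : ℕ)))

lemma extF_zero : extF h i' 0 = 0 := rfl

lemma extF_succ (a : Fin 2) : extF h i' a.succ = pIso h (i' a) := rfl

lemma extF_one : extF h i' 1 = pIso h (i' 0) := rfl

lemma extF_two : extF h i' 2 = pIso h (i' 1) := rfl

lemma pIso_pos (x : Fin (N - (v : ℕ))) : 0 < ((pIso h x : Fin (N + 1)) : ℕ) := by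
  rcases Nat.eq_zero_or_pos ((pIso h x : Fin (N + 1)) : ℕ) with h0 | h0
  · exfalso
    have := pIso_mem h x
    have hz : (pIso h x : Fin (N + 1)) = 0 := by
      apply Fin.ext; simpa using h0
    rw [hz] at this
    exact lt_irrefl _ this
  · exact h0

lemma pIso_lt_pIso {x y : Fin (N - (v : ℕ))} :
    (pIso h x : Fin (N + 1)) < (pIso h y : Fin (N + 1)) ↔ x < y :=
  Iff.trans Subtype.coe_lt_coe ((pIso h).lt_iff_lt)

lemma vIso_lt_vIso {x y : Fin (N - (v : ℕ))} :
    (vIso v x : Fin (N + 1)) < (vIso v y : Fin (N + 1)) ↔ x < y :=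
  Iff.trans Subtype.coe_lt_coe ((vIso v).lt_iff_lt)

end Translate

section Translate2

variable {N : ℕ} {π : Perm (Fin (N + 1))} {v : Fin (N + 1)}
variable (τ3 : Perm (Fin 3)) (τ2 : Perm (Fin 2))
variable (h : π 0 = v) (i' : Fin 2 → Fin (N - (v : ℕ)))

lemma posExt_ext_one : posExt (extF h i') 1 = 1 := by
  simp only [posExt]; rw [dif_pos (by omega : 1 ≤ 1 ∧ 1 ≤ 3)]
  show ((extF h i' 0 : Fin (N + 1)) : ℕ) + 1 = 1
  rw [extF_zero]; rfl

lemma posExt_ext_two : posExt (extF h i') 2 = ((pIso h (i' 0) : Fin (N + 1)) : ℕ) + 1 := by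
  simp only [posExt]; rw [dif_pos (by omega : 1 ≤ 2 ∧ 2 ≤ 3)]; rfl

lemma posExt_ext_three : posExt (extF h i') 3 = ((pIso h (i' 1) : Fin (N + 1)) : ℕ) + 1 := by
  simp only [posExt]; rw [dif_pos (by omega : 1 ≤ 3 ∧ 3 ≤ 3)]; rfl

lemma posExt_ext_four : posExt (extF h i') 4 = N + 2 := by
  simp only [posExt]; rw [dif_neg (by omega : ¬(1 ≤ 4 ∧ 4 ≤ 3)), if_neg (by omega : ¬(4 = 0))]

lemma posExt_sub_one : posExt i' 1 = ((i' 0 : Fin (N - (v : ℕ))) : ℕ) + 1 := by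
  simp only [posExt]; rw [dif_pos (by omega : 1 ≤ 1 ∧ 1 ≤ 2)]; rfl

lemma posExt_sub_two : posExt i' 2 = ((i' 1 : Fin (N - (v : ℕ))) : ℕ) + 1 := by
  simp only [posExt]; rw [dif_pos (by omega : 1 ≤ 2 ∧ 2 ≤ 2)]; rfl

lemma posExt_sub_three : posExt i' 3 = (N - (v : ℕ)) + 1 := by
  simp only [posExt]; rw [dif_neg (by omega : ¬(1 ≤ 3 ∧ 3 ≤ 2)), if_neg (by omega : ¬(3 = 0))]

lemma symm3_zero (h30 : τ3 0 = 0) : τ3.symm 0 = 0 :=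
  (Equiv.symm_apply_eq τ3).mpr h30.symm

lemma valExt_ext_one (h30 : τ3 0 = 0) : valExt τ3 π (extF h i') 1 = (v : ℕ) + 1 := by
  simp only [valExt]; rw [dif_pos (by omega : 1 ≤ 1 ∧ 1 ≤ 3)]
  show ((π (extF h i' (τ3.symm 0)) : Fin (N + 1)) : ℕ) + 1 = (v : ℕ) + 1
  rw [symm3_zero τ3 h30, extF_zero, h]

lemma valExt_ext_two (hsymm : ∀ b : Fin 2, τ3.symm b.succ = (τ2.symm b).succ) :
    valExt τ3 π (extF h i') 2 = ((vIso v (subAt h (i' (τ2.symm 0))) : Fin (N + 1)) : ℕ) + 1 := by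
  simp only [valExt]; rw [dif_pos (by omega : 1 ≤ 2 ∧ 2 ≤ 3)]
  show ((π (extF h i' (τ3.symm (0 : Fin 2).succ)) : Fin (N + 1)) : ℕ) + 1 = _
  rw [hsymm 0, extF_succ, subAt_spec h]

lemma valExt_ext_three (hsymm : ∀ b : Fin 2, τ3.symm b.succ = (τ2.symm b).succ) :
    valExt τ3 π (extF h i') 3 = ((vIso v (subAt h (i' (τ2.symm 1))) : Fin (N + 1)) : ℕ) + 1 := by
  simp only [valExt]; rw [dif_pos (by omega : 1 ≤ 3 ∧ 3 ≤ 3)]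
  show ((π (extF h i' (τ3.symm (1 : Fin 2).succ)) : Fin (N + 1)) : ℕ) + 1 = _
  rw [hsymm 1, extF_succ, subAt_spec h]

lemma valExt_ext_four : valExt τ3 π (extF h i') 4 = N + 2 := by
  simp only [valExt]; rw [dif_neg (by omega : ¬(1 ≤ 4 ∧ 4 ≤ 3)), if_neg (by omega : ¬(4 = 0))]

lemma valExt_sub_one :
    valExt τ2 (subAt h) i' 1 = ((subAt h (i' (τ2.symm 0)) : Fin (N - (v : ℕ))) : ℕ) + 1 := by
  simp only [valExt]; rw [dif_pos (by omega : 1 ≤ 1 ∧ 1 ≤ 2)]; rfl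

lemma valExt_sub_two :
    valExt τ2 (subAt h) i' 2 = ((subAt h (i' (τ2.symm 1)) : Fin (N - (v : ℕ))) : ℕ) + 1 := by
  simp only [valExt]; rw [dif_pos (by omega : 1 ≤ 2 ∧ 2 ≤ 2)]; rfl

lemma valExt_sub_three : valExt τ2 (subAt h) i' 3 = (N - (v : ℕ)) + 1 := by
  simp only [valExt]; rw [dif_neg (by omega : ¬(1 ≤ 3 ∧ 3 ≤ 2)), if_neg (by omega : ¬(3 = 0))]

end Translate2

section Translate3

variable {N : ℕ} {π : Perm (Fin (N + 1))} {v : Fin (N + 1)}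
variable (τ3 : Perm (Fin 3)) (τ2 : Perm (Fin 2))
variable (h : π 0 = v) (i' : Fin 2 → Fin (N - (v : ℕ))) (j' : Fin (N - (v : ℕ)))

lemma pIso_val_lt {x y : Fin (N - (v : ℕ))} :
    ((pIso h x : Fin (N + 1)) : ℕ) < ((pIso h y : Fin (N + 1)) : ℕ) ↔ (x : ℕ) < (y : ℕ) := by
  rw [← Fin.lt_def, ← Fin.lt_def]; exact pIso_lt_pIso h

lemma vIso_val_lt {x y : Fin (N - (v : ℕ))} :
    ((vIso v x : Fin (N + 1)) : ℕ) < ((vIso v y : Fin (N + 1)) : ℕ) ↔ (x : ℕ) < (y : ℕ) := by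
  rw [← Fin.lt_def, ← Fin.lt_def]; exact vIso_lt_vIso

lemma vIso_val_mem (x : Fin (N - (v : ℕ))) : (v : ℕ) < ((vIso v x : Fin (N + 1)) : ℕ) := by
  rw [← Fin.lt_def]; exact vIso_mem v x

lemma keyj : ((π (pIso h j') : Fin (N + 1)) : ℕ) = ((vIso v (subAt h j') : Fin (N + 1)) : ℕ) := by
  rw [subAt_spec h]

lemma cell_pos_lower {a' : ℕ} (ha : a' ≤ 2) :
    (posExt (extF h i') (a' + 1) < ((pIso h j' : Fin (N + 1)) : ℕ) + 1) ↔
      (posExt i' a' < (j' : ℕ) + 1) := by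
  interval_cases a'
  · rw [posExt_ext_one, posExt_zero]
    have := pIso_pos h j'; omega
  · rw [posExt_ext_two, posExt_sub_one]
    have := pIso_val_lt h (x := i' 0) (y := j'); omega
  · rw [posExt_ext_three, posExt_sub_two]
    have := pIso_val_lt h (x := i' 1) (y := j'); omega

lemma cell_pos_upper {a' : ℕ} (ha : a' ≤ 2) :
    (((pIso h j' : Fin (N + 1)) : ℕ) + 1 < posExt (extF h i') (a' + 1 + 1)) ↔
      ((j' : ℕ) + 1 < posExt i' (a' + 1)) := by
  interval_cases a'
  · rw [posExt_ext_two, posExt_sub_one]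
    have := pIso_val_lt h (x := j') (y := i' 0); omega
  · rw [posExt_ext_three, posExt_sub_two]
    have := pIso_val_lt h (x := j') (y := i' 1); omega
  · rw [posExt_ext_four, posExt_sub_three]
    have h1 := (pIso h j' : Fin (N + 1)).isLt
    have h2 := j'.isLt; omega

lemma cell_val_lower (h30 : τ3 0 = 0)
    (hsymm : ∀ b : Fin 2, τ3.symm b.succ = (τ2.symm b).succ) {b' : ℕ} (hb : b' ≤ 2) :
    (valExt τ3 π (extF h i') (b' + 1) < ((π (pIso h j') : Fin (N + 1)) : ℕ) + 1) ↔
      (valExt τ2 (subAt h) i' b' < ((subAt h j' : Fin (N - (v : ℕ))) : ℕ) + 1) := by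
  rw [keyj h j']
  interval_cases b'
  · rw [valExt_ext_one τ3 h i' h30, valExt_zero]
    have := vIso_val_mem (subAt h j'); omega
  · rw [valExt_ext_two τ3 τ2 h i' hsymm, valExt_sub_one]
    have := vIso_val_lt (x := subAt h (i' (τ2.symm 0))) (y := subAt h j'); omega
  · rw [valExt_ext_three τ3 τ2 h i' hsymm, valExt_sub_two]
    have := vIso_val_lt (x := subAt h (i' (τ2.symm 1))) (y := subAt h j'); omega

lemma cell_val_upper (hsymm : ∀ b : Fin 2, τ3.symm b.succ = (τ2.symm b).succ)
    {b' : ℕ} (hb : b' ≤ 2) :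
    (((π (pIso h j') : Fin (N + 1)) : ℕ) + 1 < valExt τ3 π (extF h i') (b' + 1 + 1)) ↔
      (((subAt h j' : Fin (N - (v : ℕ))) : ℕ) + 1 < valExt τ2 (subAt h) i' (b' + 1)) := by
  rw [keyj h j']
  interval_cases b'
  · rw [valExt_ext_two τ3 τ2 h i' hsymm, valExt_sub_one]
    have := vIso_val_lt (x := subAt h j') (y := subAt h (i' (τ2.symm 0))); omega
  · rw [valExt_ext_three τ3 τ2 h i' hsymm, valExt_sub_two]
    have := vIso_val_lt (x := subAt h j') (y := subAt h (i' (τ2.symm 1))); omega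
  · rw [valExt_ext_four, valExt_sub_three]
    have h1 := (vIso v (subAt h j') : Fin (N + 1)).isLt
    have h2 := (subAt h j' : Fin (N - (v : ℕ))).isLt; omega

lemma cell_big (h30 : τ3 0 = 0) (hsymm : ∀ b : Fin 2, τ3.symm b.succ = (τ2.symm b).succ)
    {b' : ℕ} (hb : b' ≤ 2) (j : Fin (N + 1))
    (hlow : valExt τ3 π (extF h i') (b' + 1) < ((π j : Fin (N + 1)) : ℕ) + 1) :
    π 0 < π j := by
  rw [h, Fin.lt_def]
  interval_cases b'
  · rw [valExt_ext_one τ3 h i' h30] at hlow; omega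
  · rw [valExt_ext_two τ3 τ2 h i' hsymm] at hlow
    have := vIso_val_mem (subAt h (i' (τ2.symm 0))); omega
  · rw [valExt_ext_three τ3 τ2 h i' hsymm] at hlow
    have := vIso_val_mem (subAt h (i' (τ2.symm 1))); omega

lemma cell_iff (h30 : τ3 0 = 0) (hsymm : ∀ b : Fin 2, τ3.symm b.succ = (τ2.symm b).succ)
    {a' b' : ℕ} (ha : a' ≤ 2) (hb : b' ≤ 2) :
    (∃ j : Fin (N + 1),
        posExt (extF h i') (a' + 1) < (j : ℕ) + 1 ∧
        (j : ℕ) + 1 < posExt (extF h i') (a' + 1 + 1) ∧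
        valExt τ3 π (extF h i') (b' + 1) < ((π j : Fin (N + 1)) : ℕ) + 1 ∧
        ((π j : Fin (N + 1)) : ℕ) + 1 < valExt τ3 π (extF h i') (b' + 1 + 1)) ↔
    (∃ j' : Fin (N - (v : ℕ)),
        posExt i' a' < (j' : ℕ) + 1 ∧
        (j' : ℕ) + 1 < posExt i' (a' + 1) ∧
        valExt τ2 (subAt h) i' b' < ((subAt h j' : Fin (N - (v : ℕ))) : ℕ) + 1 ∧
        ((subAt h j' : Fin (N - (v : ℕ))) : ℕ) + 1 < valExt τ2 (subAt h) i' (b' + 1)) := by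
  constructor
  · rintro ⟨j, h1, h2, h3, h4⟩
    have hbig : π 0 < π j := cell_big τ3 τ2 h i' h30 hsymm (b':=_) hb j h3
    set j' : Fin (N - (v : ℕ)) := (pIso h).symm ⟨j, mem_bigPos.mpr hbig⟩ with hj'
    have hj : (pIso h j' : Fin (N + 1)) = j := by
      rw [hj', OrderIso.apply_symm_apply]
    rw [← hj] at h1 h2 h3 h4
    exact ⟨j', (cell_pos_lower h i' j' ha).mp h1, (cell_pos_upper h i' j' ha).mp h2,
      (cell_val_lower τ3 τ2 h i' j' h30 hsymm (b':=_) hb).mp h3,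
      (cell_val_upper τ3 τ2 h i' j' hsymm (b':=_) hb).mp h4⟩
  · rintro ⟨j', h1, h2, h3, h4⟩
    exact ⟨pIso h j', (cell_pos_lower h i' j' ha).mpr h1, (cell_pos_upper h i' j' ha).mpr h2,
      (cell_val_lower τ3 τ2 h i' j' h30 hsymm (b':=_) hb).mpr h3,
      (cell_val_upper τ3 τ2 h i' j' hsymm (b':=_) hb).mpr h4⟩

end Translate3

abbrev Sset (R : Set (ℕ × ℕ)) : Set (ℕ × ℕ) :=
  ({(0, 0), (0, 1), (0, 2), (0, 3)} : Set (ℕ × ℕ)) ∪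
    (fun p : ℕ × ℕ => (p.1 + 1, p.2 + 1)) '' R

lemma mem_Sset {R : Set (ℕ × ℕ)} {a b : ℕ} :
    (a, b) ∈ Sset R ↔
      (a = 0 ∧ (b = 0 ∨ b = 1 ∨ b = 2 ∨ b = 3)) ∨
        (∃ a' b', (a', b') ∈ R ∧ a = a' + 1 ∧ b = b' + 1) := by
  constructor
  · rintro (hc | ⟨⟨a', b'⟩, hmem, heq⟩)
    · left
      simp only [Set.mem_insert_iff, Set.mem_singleton_iff, Prod.mk.injEq] at hc
      tauto
    · right
      rw [Prod.ext_iff] at heq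
      exact ⟨a', b', hmem, heq.1.symm, heq.2.symm⟩
  · rintro (⟨rfl, hb⟩ | ⟨a', b', hmem, rfl, rfl⟩)
    · left
      rcases hb with rfl | rfl | rfl | rfl <;> simp
    · exact Or.inr ⟨(a', b'), hmem, rfl⟩

section GenExt3

variable {n : ℕ} (i : Fin 3 → Fin n) (τ : Perm (Fin 3)) (π : Perm (Fin n))

lemma posExt3_one : posExt i 1 = (i 0 : ℕ) + 1 := by
  simp only [posExt]; rw [dif_pos (by omega : 1 ≤ 1 ∧ 1 ≤ 3)]; rfl

lemma valExt3_one : valExt τ π i 1 = (π (i (τ.symm 0)) : ℕ) + 1 := by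
  simp only [valExt]; rw [dif_pos (by omega : 1 ≤ 1 ∧ 1 ≤ 3)]; rfl

lemma valExt3_two : valExt τ π i 2 = (π (i (τ.symm 1)) : ℕ) + 1 := by
  simp only [valExt]; rw [dif_pos (by omega : 1 ≤ 2 ∧ 2 ≤ 3)]; rfl

lemma valExt3_three : valExt τ π i 3 = (π (i (τ.symm 2)) : ℕ) + 1 := by
  simp only [valExt]; rw [dif_pos (by omega : 1 ≤ 3 ∧ 3 ≤ 3)]; rfl

lemma valExt3_four : valExt τ π i 4 = n + 1 := by
  simp only [valExt]; rw [dif_neg (by omega : ¬(1 ≤ 4 ∧ 4 ≤ 3)), if_neg (by omega : ¬(4 = 0))]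

end GenExt3

section Translate4

variable {N : ℕ} {π : Perm (Fin (N + 1))} {v : Fin (N + 1)}
variable (τ3 : Perm (Fin 3)) (τ2 : Perm (Fin 2))
variable (h : π 0 = v) (i' : Fin 2 → Fin (N - (v : ℕ)))

lemma strictMono_ext_iff : StrictMono (extF h i') ↔ StrictMono i' := by
  rw [Fin.strictMono_iff_lt_succ, Fin.strictMono_iff_lt_succ]
  have c1 : extF h i' ((0 : Fin 2).castSucc) < extF h i' (0 : Fin 2).succ := by
    show (0 : Fin (N + 1)) < (pIso h (i' 0) : Fin (N + 1))
    rw [Fin.lt_def, Fin.val_zero]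
    exact pIso_pos h (i' 0)
  have c2 : (extF h i' ((1 : Fin 2).castSucc) < extF h i' (1 : Fin 2).succ) ↔ i' 0 < i' 1 := by
    show (pIso h (i' 0) : Fin (N + 1)) < (pIso h (i' 1) : Fin (N + 1)) ↔ _
    exact pIso_lt_pIso h
  rw [Fin.forall_fin_two, Fin.forall_fin_one]
  constructor
  · rintro ⟨-, h2⟩; exact c2.mp h2
  · intro h12; exact ⟨c1, c2.mpr h12⟩

lemma valCond_ext_iff (h30 : τ3 0 = 0)
    (hlt : ∀ a b : Fin 2, τ2 a < τ2 b ↔ τ3 a.succ < τ3 b.succ) :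
    (∀ a b : Fin 3, π (extF h i' a) < π (extF h i' b) ↔ τ3 a < τ3 b) ↔
      (∀ a b : Fin 2, subAt h (i' a) < subAt h (i' b) ↔ τ2 a < τ2 b) := by
  have key : ∀ x y : Fin 2,
      (π (pIso h (i' x)) < π (pIso h (i' y)) ↔ subAt h (i' x) < subAt h (i' y)) := by
    intro x y
    rw [← subAt_spec h, ← subAt_spec h]
    exact vIso_lt_vIso
  constructor
  · intro H x y
    exact (key x y).symm.trans ((H x.succ y.succ).trans (hlt x y).symm)
  · intro H a b
    induction a using Fin.cases with
    | zero =>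
      induction b using Fin.cases with
      | zero => exact iff_of_false (lt_irrefl _) (lt_irrefl _)
      | succ b =>
        apply iff_of_true
        · show π (extF h i' 0) < π (pIso h (i' b))
          rw [extF_zero]
          exact pIso_mem h (i' b)
        · rw [h30]
          exact Fin.pos_iff_ne_zero.mpr
            (fun heq => Fin.succ_ne_zero b (τ3.injective (heq.trans h30.symm)))
    | succ a =>
      induction b using Fin.cases with
      | zero =>
        apply iff_of_false
        · show ¬ π (pIso h (i' a)) < π (extF h i' 0)
          rw [extF_zero]
          exact not_lt.mpr (le_of_lt (pIso_mem h (i' a)))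
        · rw [h30]
          exact Fin.not_lt_zero _
      | succ b => exact (key a b).trans ((H a b).trans (hlt a b))

end Translate4

section Translate5

variable {N : ℕ} {π : Perm (Fin (N + 1))} {v : Fin (N + 1)} {R : Set (ℕ × ℕ)}
variable (τ3 : Perm (Fin 3)) (τ2 : Perm (Fin 2))

lemma occ_i0 {i : Fin 3 → Fin (N + 1)} (hi : IsMeshOcc τ3 (Sset R) π i) : i 0 = 0 := by
  by_contra h0
  have hsm := hi.1
  have hw : ∀ x y : Fin 3, x < y → π (i (τ3.symm x)) < π (i (τ3.symm y)) := by
    intro x y hxy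
    exact (hi.2.1 _ _).mpr (by simpa using hxy)
  have hne : ∀ b : Fin 3, (π 0 : ℕ) ≠ (π (i (τ3.symm b)) : ℕ) := by
    intro b heq
    have h1 : (0 : Fin (N + 1)) = i (τ3.symm b) := π.injective (Fin.ext heq)
    have h2 : i 0 ≤ i (τ3.symm b) := hsm.monotone (Fin.zero_le _)
    rw [← h1] at h2
    exact h0 (le_antisymm h2 (Fin.zero_le _))
  have key : ∀ b : ℕ, b ≤ 3 →
      ¬ ∃ j : Fin (N + 1), posExt i 0 < (j : ℕ) + 1 ∧ (j : ℕ) + 1 < posExt i 1 ∧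
        valExt τ3 π i b < (π j : ℕ) + 1 ∧ (π j : ℕ) + 1 < valExt τ3 π i (b + 1) := by
    intro b hb
    apply hi.2.2 0 b
    apply Set.mem_union_left
    interval_cases b <;> simp
  have hpos : 0 < (i 0 : ℕ) := by
    have := Fin.pos_iff_ne_zero.mpr h0
    rwa [Fin.lt_def, Fin.val_zero] at this
  have hw01 : (π (i (τ3.symm 0)) : ℕ) < (π (i (τ3.symm 1)) : ℕ) := hw 0 1 (by decide)
  have hw12 : (π (i (τ3.symm 1)) : ℕ) < (π (i (τ3.symm 2)) : ℕ) := hw 1 2 (by decide)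
  have hn0 := hne 0
  have hn1 := hne 1
  have hn2 := hne 2
  have hcases : ((π 0 : ℕ) < (π (i (τ3.symm 0)) : ℕ)) ∨
      ((π (i (τ3.symm 0)) : ℕ) < (π 0 : ℕ) ∧ (π 0 : ℕ) < (π (i (τ3.symm 1)) : ℕ)) ∨
      ((π (i (τ3.symm 1)) : ℕ) < (π 0 : ℕ) ∧ (π 0 : ℕ) < (π (i (τ3.symm 2)) : ℕ)) ∨
      ((π (i (τ3.symm 2)) : ℕ) < (π 0 : ℕ)) := by omega
  have hjval : (π (0 : Fin (N + 1)) : ℕ) = (π 0 : ℕ) := rfl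
  rcases hcases with hc | ⟨hc1, hc2⟩ | ⟨hc1, hc2⟩ | hc
  · exact key 0 (by omega) ⟨0, by rw [posExt_zero]; omega, by rw [posExt3_one]; have hz : ((0 : Fin (N + 1)) : ℕ) = 0 := rfl; omega,
      by rw [valExt_zero]; omega, by rw [valExt3_one]; omega⟩
  · exact key 1 (by omega) ⟨0, by rw [posExt_zero]; omega, by rw [posExt3_one]; have hz : ((0 : Fin (N + 1)) : ℕ) = 0 := rfl; omega,
      by rw [valExt3_one]; omega,
      by rw [valExt3_two]; omega⟩
  · exact key 2 (by omega) ⟨0, by rw [posExt_zero]; omega, by rw [posExt3_one]; have hz : ((0 : Fin (N + 1)) : ℕ) = 0 := rfl; omega,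
      by rw [valExt3_two]; omega,
      by rw [valExt3_three]; omega⟩
  · exact key 3 (by omega) ⟨0, by rw [posExt_zero]; omega, by rw [posExt3_one]; have hz : ((0 : Fin (N + 1)) : ℕ) = 0 := rfl; omega,
      by rw [valExt3_three]; omega,
      by rw [valExt3_four]; have := (π (0 : Fin (N + 1))).isLt; omega⟩

lemma isMeshOcc_ext_iff (hR : ∀ p ∈ R, p.1 ≤ 2 ∧ p.2 ≤ 2) (h : π 0 = v)
    (i' : Fin 2 → Fin (N - (v : ℕ)))
    (h30 : τ3 0 = 0) (hlt : ∀ a b : Fin 2, τ2 a < τ2 b ↔ τ3 a.succ < τ3 b.succ)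
    (hsymm : ∀ b : Fin 2, τ3.symm b.succ = (τ2.symm b).succ) :
    IsMeshOcc τ3 (Sset R) π (extF h i') ↔ IsMeshOcc τ2 R (subAt h) i' := by
  unfold IsMeshOcc
  constructor
  · rintro ⟨m1, m2, m3⟩
    refine ⟨(strictMono_ext_iff h i').mp m1, (valCond_ext_iff τ3 τ2 h i' h30 hlt).mp m2, ?_⟩
    intro a' b' hab
    obtain ⟨ha, hb⟩ := hR (a', b') hab
    intro hex
    exact m3 (a' + 1) (b' + 1) (Set.mem_union_right _ ⟨(a', b'), hab, rfl⟩)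
      ((cell_iff τ3 τ2 h i' h30 hsymm ha hb).mpr hex)
  · rintro ⟨m1, m2, m3⟩
    refine ⟨(strictMono_ext_iff h i').mpr m1, (valCond_ext_iff τ3 τ2 h i' h30 hlt).mpr m2, ?_⟩
    intro a b hab
    rcases mem_Sset.mp hab with ⟨rfl, hb⟩ | ⟨a', b', hR', rfl, rfl⟩
    · rintro ⟨j, h1, h2, -⟩
      rw [posExt_ext_one] at h2
      omega
    · obtain ⟨ha', hb'⟩ := hR _ hR'
      intro hex
      exact m3 a' b' hR' ((cell_iff τ3 τ2 h i' h30 hsymm ha' hb').mp hex)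

lemma occ_eq (hR : ∀ p ∈ R, p.1 ≤ 2 ∧ p.2 ≤ 2) (h : π 0 = v)
    (h30 : τ3 0 = 0) (hlt : ∀ a b : Fin 2, τ2 a < τ2 b ↔ τ3 a.succ < τ3 b.succ)
    (hsymm : ∀ b : Fin 2, τ3.symm b.succ = (τ2.symm b).succ) :
    occ τ3 (Sset R) π = occ τ2 R (subAt h) := by
  unfold occ
  apply Nat.card_congr
  refine (Equiv.ofBijective
    (fun x : {i' // IsMeshOcc τ2 R (subAt h) i'} =>
      (⟨extF h x.1, (isMeshOcc_ext_iff τ3 τ2 hR h x.1 h30 hlt hsymm).mpr x.2⟩ :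
        {i // IsMeshOcc τ3 (Sset R) π i})) ⟨?_, ?_⟩).symm
  · intro x y hxy
    apply Subtype.ext
    funext a
    have := congrFun (congrArg Subtype.val hxy) a.succ
    simp only [extF_succ] at this
    exact (pIso h).injective (Subtype.ext this)
  · rintro ⟨i, hi⟩
    have h0 : i 0 = 0 := occ_i0 τ3 hi
    have hmem : ∀ a : Fin 2, i a.succ ∈ bigPos π := by
      intro a
      apply mem_bigPos.mpr
      have : π (i 0) < π (i a.succ) := by
        apply (hi.2.1 0 a.succ).mpr
        rw [h30]
        exact Fin.pos_iff_ne_zero.mpr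
          (fun heq => Fin.succ_ne_zero a (τ3.injective (heq.trans h30.symm)))
      rwa [h0] at this
    set i' : Fin 2 → Fin (N - (v : ℕ)) := fun a => (pIso h).symm ⟨i a.succ, hmem a⟩ with hi'def
    have hext : extF h i' = i := by
      funext a
      induction a using Fin.cases with
      | zero => rw [extF_zero, h0]
      | succ a =>
        rw [extF_succ, hi'def]
        simp only [OrderIso.apply_symm_apply]
    rw [← hext] at hi
    exact ⟨⟨i', (isMeshOcc_ext_iff τ3 τ2 hR h i' h30 hlt hsymm).mp hi⟩, Subtype.ext hext⟩

end Translate5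

section Fiber

variable {N : ℕ}

noncomputable def subD (N : ℕ) (v : Fin (N + 1)) (π : Perm (Fin (N + 1))) :
    Perm (Fin (N - (v : ℕ))) :=
  if h : π 0 = v then subAt h else 1

lemma subD_eq {π : Perm (Fin (N + 1))} {v : Fin (N + 1)} (h : π 0 = v) :
    subD N v π = subAt h := dif_pos h

lemma orderIsoOfFin_congr {α} [LinearOrder α] {s t : Finset α} {k : ℕ} (hst : s = t)
    (hs : s.card = k) (ht : t.card = k) (x : Fin k) :
    (s.orderIsoOfFin hs x : α) = (t.orderIsoOfFin ht x : α) := by subst hst; rfl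

variable (v : Fin (N + 1)) (e : Perm (Fin (N - (v : ℕ))))

lemma step_zero (π : Perm (Fin (N + 1))) (h : π 0 = v) :
    (e.extendDomain (vIso v).toEquiv * π) 0 = v := by
  show (e.extendDomain (vIso v).toEquiv) (π 0) = v
  rw [h]
  apply Equiv.Perm.extendDomain_apply_not_subtype
  show ¬ v ∈ bigVal v
  rw [mem_bigVal]
  exact lt_irrefl v

lemma step_bigPos (π : Perm (Fin (N + 1))) (h : π 0 = v) :
    bigPos (e.extendDomain (vIso v).toEquiv * π) = bigPos π := by
  have h0 : (e.extendDomain (vIso v).toEquiv * π) 0 = π 0 := by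
    rw [step_zero v e π h, h]
  ext j
  rw [mem_bigPos, mem_bigPos, h0]
  show π 0 < (e.extendDomain (vIso v).toEquiv) (π j) ↔ π 0 < π j
  by_cases hj : π 0 < π j
  · have hmem : π j ∈ bigVal v := mem_bigVal.mpr (h ▸ hj)
    rw [Equiv.Perm.extendDomain_apply_subtype _ _ hmem]
    have h2 := mem_bigVal.mp
      ((vIso v).toEquiv (e ((vIso v).toEquiv.symm ⟨π j, hmem⟩))).2
    exact iff_of_true (h ▸ h2) hj
  · have hmem : π j ∉ bigVal v := fun hm => hj (h ▸ mem_bigVal.mp hm)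
    rw [Equiv.Perm.extendDomain_apply_not_subtype _ _ hmem]

lemma step_subD (π : Perm (Fin (N + 1))) (h : π 0 = v) :
    subD N v (e.extendDomain (vIso v).toEquiv * π) = e * subD N v π := by
  have h' : (e.extendDomain (vIso v).toEquiv * π) 0 = v := step_zero v e π h
  rw [subD_eq h, subD_eq h']
  apply Equiv.ext
  intro x
  apply (vIso v).injective
  apply Subtype.ext
  rw [subAt_spec h']
  show (e.extendDomain (vIso v).toEquiv * π) ((pIso h' x : Fin (N + 1))) =
    ((vIso v) ((e * subAt h) x) : Fin (N + 1))
  have hpi : ((pIso h' x : Fin (N + 1))) = (pIso h x : Fin (N + 1)) :=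
    orderIsoOfFin_congr (step_bigPos v e π h) _ _ x
  rw [hpi]
  show (e.extendDomain (vIso v).toEquiv) (π (pIso h x)) = _
  rw [← subAt_spec h]
  exact Equiv.Perm.extendDomain_apply_image e (vIso v).toEquiv (subAt h x)

open scoped Classical in
lemma fiber_card (σ0 σ1 : Perm (Fin (N - (v : ℕ)))) :
    (univ.filter fun π : Perm (Fin (N + 1)) => π 0 = v ∧ subD N v π = σ0).card =
    (univ.filter fun π : Perm (Fin (N + 1)) => π 0 = v ∧ subD N v π = σ1).card := by
  apply Finset.card_bij
    (i := fun π _ => (σ1 * σ0⁻¹).extendDomain (vIso v).toEquiv * π)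
  · intro π hπ
    simp only [mem_filter, mem_univ, true_and] at hπ ⊢
    obtain ⟨h, hs⟩ := hπ
    refine ⟨step_zero v _ π h, ?_⟩
    rw [step_subD v _ π h, hs, inv_mul_cancel_right]
  · intro a _ b _ hab
    exact mul_left_cancel hab
  · intro π' hπ'
    simp only [mem_filter, mem_univ, true_and] at hπ'
    obtain ⟨h, hs⟩ := hπ'
    refine ⟨(σ0 * σ1⁻¹).extendDomain (vIso v).toEquiv * π', ?_, ?_⟩
    · simp only [mem_filter, mem_univ, true_and]
      refine ⟨step_zero v _ π' h, ?_⟩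
      rw [step_subD v _ π' h, hs, inv_mul_cancel_right]
    · rw [← mul_assoc, Equiv.Perm.extendDomain_mul]
      have : (σ1 * σ0⁻¹) * (σ0 * σ1⁻¹) = 1 := by group
      rw [this, Equiv.Perm.extendDomain_one, one_mul]

end Fiber

section Count

open scoped Classical

noncomputable def cst (N : ℕ) (v : Fin (N + 1)) : ℕ :=
  (univ.filter fun π : Perm (Fin (N + 1)) => π 0 = v ∧ subD N v π = 1).card

lemma subD_one {N : ℕ} : subD N 0 (1 : Perm (Fin (N + 1))) = 1 := by
  have h : (1 : Perm (Fin (N + 1))) 0 = (0 : Fin (N + 1)) := rfl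
  rw [subD_eq h]
  apply Equiv.ext
  intro x
  apply (vIso 0).injective
  apply Subtype.ext
  rw [subAt_spec h]
  show ((pIso h x : Fin (N + 1))) = ((vIso 0 x : Fin (N + 1)))
  apply orderIsoOfFin_congr
  ext j
  rw [mem_bigPos, mem_bigVal]
  show (1 : Perm (Fin (N + 1))) 0 < (1 : Perm (Fin (N + 1))) j ↔ 0 < j
  simp

lemma cst_pos (N : ℕ) : 0 < cst N 0 := by
  apply Finset.card_pos.mpr
  exact ⟨1, Finset.mem_filter.mpr ⟨Finset.mem_univ _, rfl, subD_one⟩⟩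

noncomputable abbrev Bc (R : Set (ℕ × ℕ)) (m k ℓ : ℕ) : ℕ :=
  Nat.card {s : Perm (Fin m) // occ perm12 R s = k ∧ occ perm21 R s = ℓ}

lemma count {N : ℕ} (R : Set (ℕ × ℕ)) (hR : ∀ p ∈ R, p.1 ≤ 2 ∧ p.2 ≤ 2) (k ℓ : ℕ) :
    Nat.card {π : Perm (Fin (N + 1)) //
        occ perm123 (Sset R) π = k ∧ occ perm132 (Sset R) π = ℓ} =
      ∑ v : Fin (N + 1), cst N v * Bc R (N - (v : ℕ)) k ℓ := by
  have occ1 : ∀ (π : Perm (Fin (N + 1))) (v : Fin (N + 1)) (h : π 0 = v),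
      occ perm123 (Sset R) π = occ perm12 R (subAt h) :=
    fun π v h => occ_eq perm123 perm12 hR h (by decide) (by decide) (by decide)
  have occ2 : ∀ (π : Perm (Fin (N + 1))) (v : Fin (N + 1)) (h : π 0 = v),
      occ perm132 (Sset R) π = occ perm21 R (subAt h) :=
    fun π v h => occ_eq perm132 perm21 hR h (by decide) (by decide) (by decide)
  rw [Nat.card_eq_fintype_card, Fintype.card_subtype]
  rw [Finset.card_eq_sum_card_fiberwise
    (f := fun π : Perm (Fin (N + 1)) => π 0) (t := univ) (fun x _ => mem_univ _)]
  apply Finset.sum_congr rfl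
  intro v _
  rw [Finset.filter_filter]
  have hmemb : ∀ π ∈ (univ.filter fun π : Perm (Fin (N + 1)) =>
      (occ perm123 (Sset R) π = k ∧ occ perm132 (Sset R) π = ℓ) ∧ π 0 = v),
      subD N v π ∈ (univ.filter fun s : Perm (Fin (N - (v : ℕ))) =>
        occ perm12 R s = k ∧ occ perm21 R s = ℓ) := by
    intro π hπ
    simp only [mem_filter, mem_univ, true_and] at hπ ⊢
    obtain ⟨⟨hk, hl⟩, h⟩ := hπ
    rw [subD_eq h]
    exact ⟨(occ1 π v h) ▸ hk, (occ2 π v h) ▸ hl⟩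
  rw [Finset.card_eq_sum_card_fiberwise hmemb]
  have hfib : ∀ σ0 ∈ (univ.filter fun s : Perm (Fin (N - (v : ℕ))) =>
      occ perm12 R s = k ∧ occ perm21 R s = ℓ),
      ((univ.filter fun π : Perm (Fin (N + 1)) =>
        (occ perm123 (Sset R) π = k ∧ occ perm132 (Sset R) π = ℓ) ∧ π 0 = v).filter
          fun π => subD N v π = σ0).card = cst N v := by
    intro σ0 hσ0
    simp only [mem_filter, mem_univ, true_and] at hσ0
    rw [Finset.filter_filter]
    have heq : (univ.filter fun π : Perm (Fin (N + 1)) =>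
        ((occ perm123 (Sset R) π = k ∧ occ perm132 (Sset R) π = ℓ) ∧ π 0 = v) ∧
          subD N v π = σ0) =
        (univ.filter fun π : Perm (Fin (N + 1)) => π 0 = v ∧ subD N v π = σ0) := by
      apply Finset.filter_congr
      intro π _
      constructor
      · rintro ⟨⟨-, h⟩, hs⟩; exact ⟨h, hs⟩
      · rintro ⟨h, hs⟩
        have hs' : subAt h = σ0 := by rw [← subD_eq h]; exact hs
        exact ⟨⟨⟨by rw [occ1 π v h, hs']; exact hσ0.1,
          by rw [occ2 π v h, hs']; exact hσ0.2⟩, h⟩, hs⟩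
    rw [heq]
    exact fiber_card v σ0 1
  rw [Finset.sum_congr rfl hfib, Finset.sum_const, smul_eq_mul]
  simp only [Bc]
  rw [Nat.card_eq_fintype_card, Fintype.card_subtype]
  ring

end Count

lemma occ_fin_zero {m : ℕ} (hm : 0 < m) (τ : Perm (Fin m)) (S : Set (ℕ × ℕ))
    (π : Perm (Fin 0)) : occ τ S π = 0 := by
  unfold occ
  haveI : IsEmpty {i : Fin m → Fin 0 // IsMeshOcc τ S π i} :=
    ⟨fun x => (x.1 ⟨0, hm⟩).elim0⟩
  exact Nat.card_of_isEmpty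

lemma backward (R : Set (ℕ × ℕ)) (hR : ∀ p ∈ R, p.1 ≤ 2 ∧ p.2 ≤ 2)
    (hq : JointlyEquidistributed perm123 (Sset R) perm132 (Sset R)) :
    ∀ m k ℓ : ℕ, Bc R m k ℓ = Bc R m ℓ k := by
  intro m
  induction m using Nat.strong_induction_on with
  | _ m IH =>
    intro k ℓ
    have h3 := hq (m + 1) k ℓ
    rw [count R hR k ℓ, count R hR ℓ k] at h3
    rw [Fin.sum_univ_succ, Fin.sum_univ_succ] at h3
    have htail : ∑ i : Fin m, cst m i.succ * Bc R (m - ((i.succ : Fin (m + 1)) : ℕ)) k ℓ =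
        ∑ i : Fin m, cst m i.succ * Bc R (m - ((i.succ : Fin (m + 1)) : ℕ)) ℓ k := by
      apply Finset.sum_congr rfl
      intro i _
      rw [IH (m - ((i.succ : Fin (m + 1)) : ℕ)) (by
        have := i.isLt
        rw [Fin.val_succ]
        omega) k ℓ]
    rw [htail] at h3
    have hcancel := Nat.add_right_cancel h3
    have h0 : ((0 : Fin (m + 1)) : ℕ) = 0 := rfl
    rw [h0, Nat.sub_zero] at hcancel
    exact Nat.eq_of_mul_eq_mul_left (cst_pos m) hcancel

lemma forward (R : Set (ℕ × ℕ)) (hR : ∀ p ∈ R, p.1 ≤ 2 ∧ p.2 ≤ 2)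
    (hp : JointlyEquidistributed perm12 R perm21 R) :
    JointlyEquidistributed perm123 (Sset R) perm132 (Sset R) := by
  intro n k ℓ
  cases n with
  | zero =>
    apply Nat.card_congr
    apply Equiv.subtypeEquivRight
    intro π
    rw [occ_fin_zero (by omega) perm123 (Sset R) π, occ_fin_zero (by omega) perm132 (Sset R) π]
    tauto
  | succ N =>
    rw [count R hR k ℓ, count R hR ℓ k]
    apply Finset.sum_congr rfl
    intro v _
    rw [show Bc R (N - (v : ℕ)) k ℓ = Bc R (N - (v : ℕ)) ℓ k from hp (N - (v : ℕ)) k ℓ]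

theorem statement_0 (R : Set (ℕ × ℕ)) (hR : ∀ p ∈ R, p.1 ≤ 2 ∧ p.2 ≤ 2) :
    JointlyEquidistributed perm123
        (({(0, 0), (0, 1), (0, 2), (0, 3)} : Set (ℕ × ℕ)) ∪
          (fun p : ℕ × ℕ => (p.1 + 1, p.2 + 1)) '' R)
      perm132
        (({(0, 0), (0, 1), (0, 2), (0, 3)} : Set (ℕ × ℕ)) ∪
          (fun p : ℕ × ℕ => (p.1 + 1, p.2 + 1)) '' R) ↔
    JointlyEquidistributed perm12 R perm21 R := by
  constructor
  · intro hq n k ℓ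
    exact backward R hR hq n k ℓ
  · intro hp
    exact forward R hR hp
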